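/- Let n ≥ 1, k ∈ {1,...,n}, and let P_k be the orthogonal projection onto the k-th coordinate in ℝ^n. Let A be a symmetric n×n matrix with eigenvalues λ₁ ≤ ... ≤ λ_n and orthonormal eigenbasis v₁,...,v_n. If λ is not an eigenvalue of A and Σ_{i=1}^n v_i(k)²/(λ_i - λ) > 0, then for every t > 0, λ is not an eigenvalue of A + t·P_k. -/

import Mathlib

open Matrix

/-- Let `A` be a symmetric `n × n` real matrix with eigenvalues
`λ₁ ≤ … ≤ λ_n` and orthonormal eigenbasis `v₁,…,v_n`, and let `P_k` be the orthogonal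
projection onto the `k`-th coordinate.  If `λ` is not an eigenvalue of `A` and
`Σᵢ vᵢ(k)²/(λᵢ - λ) > 0`, then for every `t > 0`, `λ` is not an eigenvalue of
`A + t·P_k`. -/
theorem eigenvalue_obstruction
    (n : ℕ) (hn : 0 < n) (k : Fin n)
    (A : Matrix (Fin n) (Fin n) ℝ) (hA : A.IsSymm)
    (μ : Fin n → ℝ) (hμ : Monotone μ)
    (v : Fin n → Fin n → ℝ)
    (horth : ∀ i j, v i ⬝ᵥ v j = if i = j then (1 : ℝ) else 0)
    (heig : ∀ i, A.mulVec (v i) = μ i • v i)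
    (lam : ℝ)
    (hnot : ∀ u : Fin n → ℝ, A.mulVec u = lam • u → u = 0)
    (hsum : 0 < ∑ i, v i k ^ 2 / (μ i - lam)) :
    ∀ t : ℝ, 0 < t → ∀ u : Fin n → ℝ,
      (A + t • Matrix.single k k (1 : ℝ)).mulVec u = lam • u → u = 0 := by
  intro t ht u hu
  set c : Fin n → ℝ := fun i => v i ⬝ᵥ u with hc
  -- μ i ≠ lam
  have hμne : ∀ i, μ i - lam ≠ 0 := by
    intro i hcon
    have hlam : μ i = lam := by linarith [sub_eq_zero.mp hcon]
    have hv0 : v i = 0 := hnot (v i) (by rw [heig i, hlam])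
    have h1 := horth i i
    simp [hv0] at h1
  -- projection action
  have hP : ∀ i, v i ⬝ᵥ ((Matrix.single k k (1:ℝ)).mulVec u) = v i k * u k := by
    intro i
    simp [Matrix.mulVec, dotProduct, Matrix.single, ite_and, Finset.mul_sum,
      mul_ite, Finset.sum_ite_eq, Finset.sum_ite_eq', mul_comm]
  -- symmetric dot product
  have hAdot : ∀ i, v i ⬝ᵥ A.mulVec u = μ i * c i := by
    intro i
    rw [Matrix.dotProduct_mulVec, ← Matrix.mulVec_transpose, hA.eq, heig i]
    simp [smul_dotProduct, hc]
  -- key equation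
  have hkey : ∀ i, (μ i - lam) * c i = - t * u k * v i k := by
    intro i
    have h1 : v i ⬝ᵥ ((A + t • Matrix.single k k (1 : ℝ)).mulVec u)
        = v i ⬝ᵥ (lam • u) := by rw [hu]
    rw [Matrix.add_mulVec, Matrix.smul_mulVec, dotProduct_add,
      dotProduct_smul, hAdot i, hP i, dotProduct_smul] at h1
    have h2 : lam • (v i ⬝ᵥ u) = lam * c i := by simp [hc]
    rw [h2] at h1
    simp only [smul_eq_mul] at h1
    linear_combination h1
  -- completeness
  set M : Matrix (Fin n) (Fin n) ℝ := Matrix.of v with hM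
  have hMMt : M * Mᵀ = 1 := by
    ext i j
    have := horth i j
    simpa [Matrix.mul_apply, dotProduct, hM, Matrix.one_apply] using this
  have hMtM : Mᵀ * M = 1 := mul_eq_one_comm.mp hMMt
  have hcol : ∀ j l, ∑ i, v i j * v i l = if j = l then (1:ℝ) else 0 := by
    intro j l
    have h := congrFun (congrFun hMtM j) l
    simpa [Matrix.mul_apply, hM, Matrix.one_apply] using h
  have hrep : ∀ j, u j = ∑ i, v i j * c i := by
    intro j
    have h1 : (∑ i, v i j * c i) = ∑ l, (∑ i, v i j * v i l) * u l := by
      simp only [hc, dotProduct, Finset.mul_sum, Finset.sum_mul]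
      rw [Finset.sum_comm]
      apply Finset.sum_congr rfl; intro l _
      apply Finset.sum_congr rfl; intro i _
      ring
    rw [h1]
    simp [hcol, ite_mul, Finset.sum_ite_eq]
  -- c i expressed
  have hci : ∀ i, c i = - t * u k * v i k / (μ i - lam) := by
    intro i
    rw [eq_div_iff (hμne i)]
    linear_combination hkey i
  -- u k = - t * u k * S
  have huk : u k = - t * u k * ∑ i, v i k ^ 2 / (μ i - lam) := by
    conv_lhs => rw [hrep k]
    rw [Finset.mul_sum]
    apply Finset.sum_congr rfl
    intro i _
    rw [hci i]
    field_simp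
  have hpos : 0 < 1 + t * ∑ i, v i k ^ 2 / (μ i - lam) := by nlinarith [mul_pos ht hsum]
  have huk0 : u k = 0 := by
    have h1 : u k * (1 + t * ∑ i, v i k ^ 2 / (μ i - lam)) = 0 := by
      linear_combination huk
    rcases mul_eq_zero.mp h1 with h | h
    · exact h
    · linarith
  have hc0 : ∀ i, c i = 0 := by
    intro i; rw [hci i, huk0]; simp
  funext j
  rw [hrep j]
  simp [hc0]
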